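/- Let m, d, e be positive integers with e = gcd(m,d). Then any basis of F_{2^m} over F_{2^e} is also a basis of F_{2^{md/e}} over F_{2^d}, where F_{2^m} is viewed inside F_{2^{md/e}} via the natural embedding. -/

import Mathlib

open Polynomial in
lemma aux_mem_range (D L : Type*) [Field D] [Field L] [Algebra D L] [Fintype D]
    (x : L) (hx : x ^ Fintype.card D = x) : x ∈ Set.range (algebraMap D L) := by
  classical
  set q := Fintype.card D with hq
  have hq1 : 1 < q := Fintype.one_lt_card
  have hpne : (X ^ q - X : L[X]) ≠ 0 := FiniteField.X_pow_card_sub_X_ne_zero L hq1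
  set T : Finset L := (X ^ q - X : L[X]).roots.toFinset with hT
  have hcardT : T.card ≤ q := by
    calc T.card ≤ Multiset.card (X ^ q - X : L[X]).roots := Multiset.toFinset_card_le _
    _ ≤ (X ^ q - X : L[X]).natDegree := Polynomial.card_roots' _
    _ = q := FiniteField.X_pow_card_sub_X_natDegree_eq L hq1
  have hroot : ∀ y : L, y ^ q = y → y ∈ T := by
    intro y hy
    simp only [hT, Multiset.mem_toFinset, mem_roots hpne, IsRoot.def, eval_sub, eval_pow,
      eval_X, sub_eq_zero, hy]
  set img : Finset L := Finset.univ.image (algebraMap D L) with himg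
  have hsub : img ⊆ T := by
    intro y hy
    simp only [himg, Finset.mem_image] at hy
    obtain ⟨dd, _, rfl⟩ := hy
    apply hroot
    rw [← map_pow, FiniteField.pow_card]
  have hcardimg : img.card = q := by
    rw [himg, Finset.card_image_of_injective _ (algebraMap D L).injective, Finset.card_univ]
  have heq : img = T := Finset.eq_of_subset_of_card_le hsub (by omega)
  have hxT : x ∈ T := hroot x hx
  rw [← heq] at hxT
  simp only [himg, Finset.mem_image] at hxT
  obtain ⟨dd, _, rfl⟩ := hxT
  exact ⟨dd, rfl⟩

lemma aux_dvd (m : ℕ) (hm : 0 < m) : ∀ n, (2 ^ m - 1 ∣ 2 ^ n - 1) → m ∣ n := by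
  intro n
  induction n using Nat.strong_induction_on with
  | _ n ih =>
    intro h
    rcases Nat.eq_zero_or_pos n with rfl | hn
    · exact Dvd.intro 0 rfl
    rcases lt_or_ge n m with hlt | hle
    · have h2 : (2:ℕ) ^ n < 2 ^ m := Nat.pow_lt_pow_right one_lt_two hlt
      have h3 : (1:ℕ) ≤ 2 ^ n := Nat.one_le_two_pow
      have h4 : (2:ℕ) ^ 1 ≤ 2 ^ n := Nat.pow_le_pow_right (by norm_num) hn
      have := Nat.le_of_dvd (by omega) h
      omega
    · have h2 : (2:ℕ) ^ (n - m) ≤ 2 ^ n := Nat.pow_le_pow_right (by norm_num) (by omega)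
      have h1 : 2 ^ n - 2 ^ (n - m) = 2 ^ (n - m) * (2 ^ m - 1) := by
        rw [Nat.mul_sub, mul_one, ← pow_add]
        congr 2
        omega
      have h3 : (1:ℕ) ≤ 2 ^ (n - m) := Nat.one_le_two_pow
      have h4 : (1:ℕ) ≤ 2 ^ n := Nat.one_le_two_pow
      have h5 : (2:ℕ) ^ (n - m) - 1 = (2 ^ n - 1) - (2 ^ n - 2 ^ (n - m)) := by omega
      have key : 2 ^ m - 1 ∣ 2 ^ (n - m) - 1 := by
        rw [h5, h1]
        exact Nat.dvd_sub h (Dvd.intro_left _ rfl)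
      obtain ⟨k, hk⟩ := ih (n - m) (by omega) key
      exact ⟨k + 1, by rw [Nat.mul_succ, ← hk]; omega⟩

/-- Let `e = gcd(m,d)`. Inside `L = F_{2^{md/e}}`, any basis of `K = F_{2^m}`
over `E = F_{2^e}` is also a basis of `L` over `D = F_{2^d}`. -/
theorem basis_over_subfield_is_basis_over_other
    (m d e : ℕ) (hm : 0 < m) (hd : 0 < d) (he : e = Nat.gcd m d)
    (E K D L : Type*) [Field E] [Field K] [Field D] [Field L]
    [Algebra E K] [Algebra E L] [Algebra K L] [IsScalarTower E K L] [Algebra D L]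
    [Fintype E] [Fintype K] [Fintype D] [Fintype L]
    (hE : Fintype.card E = 2 ^ e) (hK : Fintype.card K = 2 ^ m)
    (hD : Fintype.card D = 2 ^ d) (hL : Fintype.card L = 2 ^ (m * d / e))
    {ι : Type*} (b : Module.Basis ι E K) :
    LinearIndependent D (fun i => algebraMap K L (b i)) ∧
      Submodule.span D (Set.range fun i => algebraMap K L (b i)) = ⊤ := by
  classical
  have he_pos : 0 < e := he ▸ Nat.gcd_pos_of_pos_left d hm
  have hem : e ∣ m := he ▸ Nat.gcd_dvd_left m d
  have hed : e ∣ d := he ▸ Nat.gcd_dvd_right m d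
  set f : ι → L := fun i => algebraMap K L (b i) with hf
  -- rank computations
  have hrankK : m = e * Module.finrank E K := by
    have h1 : Fintype.card K = Fintype.card E ^ Module.finrank E K :=
      Module.card_eq_pow_finrank
    rw [hK, hE, ← pow_mul] at h1
    exact Nat.pow_right_injective le_rfl h1
  have hrankL : m * d / e = d * Module.finrank D L := by
    have h1 : Fintype.card L = Fintype.card D ^ Module.finrank D L :=
      Module.card_eq_pow_finrank
    rw [hL, hD, ← pow_mul] at h1
    exact Nat.pow_right_injective le_rfl h1
  have hmd : m * d / e = Module.finrank E K * d := by
    rw [hrankK, mul_assoc, mul_comm e, Nat.mul_div_cancel _ he_pos]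
  have hrk_eq : Module.finrank D L = Module.finrank E K := by
    have : d * Module.finrank D L = d * Module.finrank E K := by
      rw [← hrankL, hmd, mul_comm]
    exact Nat.eq_of_mul_eq_mul_left hd this
  -- every scalar from E is a scalar from D, inside L
  have hED : ∀ c : E, ∃ δ : D, algebraMap D L δ = algebraMap E L c := by
    intro c
    have hc : c ^ (2 ^ d) = c := by
      calc c ^ (2 ^ d) = c ^ Fintype.card E ^ (d / e) := by
            rw [hE, ← pow_mul, Nat.mul_div_cancel' hed]
        _ = c := FiniteField.pow_card_pow _ _
    have hx : (algebraMap E L c) ^ Fintype.card D = algebraMap E L c := by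
      rw [hD, ← map_pow, hc]
    exact aux_mem_range D L _ hx
  set S : Submodule D L := Submodule.span D (Set.range f) with hS
  -- the image of K lies in S
  have himgK : ∀ x : K, algebraMap K L x ∈ S := by
    intro x
    have hx : x ∈ Submodule.span E (Set.range b) := by rw [b.span_eq]; trivial
    set φ := (IsScalarTower.toAlgHom E K L).toLinearMap with hφ
    have h1 : algebraMap K L x ∈ Submodule.map φ (Submodule.span E (Set.range b)) :=
      ⟨x, hx, rfl⟩
    rw [Submodule.map_span] at h1
    have himg : φ '' Set.range b = Set.range f := by
      ext y; simp [hφ, hf]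
    rw [himg] at h1
    refine Submodule.span_induction (fun u hu => Submodule.subset_span hu) (S.zero_mem)
      (fun u v _ _ hu hv => S.add_mem hu hv) ?_ h1
    intro c u _ hu
    obtain ⟨δ, hδ⟩ := hED c
    have : c • u = δ • u := by
      rw [Algebra.smul_def, Algebra.smul_def, hδ]
    rw [this]
    exact S.smul_mem δ hu
  -- S is closed under multiplication
  have hmul : ∀ x ∈ S, ∀ y ∈ S, x * y ∈ S := by
    intro x hx y hy
    induction hx, hy using Submodule.span_induction₂ with
    | mem_mem u v hu hv =>
      obtain ⟨i, rfl⟩ := hu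
      obtain ⟨j, rfl⟩ := hv
      have : f i * f j = algebraMap K L (b i * b j) := by rw [map_mul]
      rw [this]
      exact himgK _
    | zero_left v hv => simpa using S.zero_mem
    | zero_right u hu => simpa using S.zero_mem
    | add_left u v w hu hv hw h1 h2 => rw [add_mul]; exact S.add_mem h1 h2
    | add_right u v w hu hv hw h1 h2 => rw [mul_add]; exact S.add_mem h1 h2
    | smul_left r u v hu hv h1 => rw [smul_mul_assoc]; exact S.smul_mem r h1
    | smul_right r u v hu hv h1 => rw [mul_smul_comm]; exact S.smul_mem r h1
  -- make a subring
  set R : Subring L :=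
    { carrier := S
      mul_mem' := fun hx hy => hmul _ hx _ hy
      one_mem' := by simpa using himgK 1
      add_mem' := fun hx hy => S.add_mem hx hy
      zero_mem' := S.zero_mem
      neg_mem' := fun hx => S.neg_mem hx } with hR
  haveI : Fintype R := Fintype.ofFinite R
  haveI : Fintype S := Fintype.ofFinite S
  letI : Field R := Fintype.fieldOfDomain R
  have hcardRS : Fintype.card R = Fintype.card S :=
    Fintype.card_congr (Equiv.subtypeEquivRight (fun x => Iff.rfl))
  set r : ℕ := Module.finrank D S with hr
  have hcardS : Fintype.card S = 2 ^ (d * r) := by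
    rw [(Module.card_eq_pow_finrank : Fintype.card S = Fintype.card D ^ r), hD, ← pow_mul]
  -- the generator argument
  obtain ⟨g, hg⟩ := IsCyclic.exists_generator (α := Kˣ)
  have hordg : orderOf (g : K) = 2 ^ m - 1 := by
    rw [orderOf_units, orderOf_eq_card_of_forall_mem_zpowers hg, Nat.card_units, Nat.card_eq_fintype_card, hK]
  set x : L := algebraMap K L (g : K) with hxdef
  have hordx : orderOf x = 2 ^ m - 1 := by
    rw [← hordg]
    exact orderOf_injective (algebraMap K L).toMonoidHom (algebraMap K L).injective (g : K)
  have hxR : x ∈ R := himgK _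
  have hxne : x ≠ 0 := by
    simp only [hxdef, ne_eq, map_eq_zero]
    exact Units.ne_zero g
  set x' : R := ⟨x, hxR⟩ with hx'
  have hx'ne : x' ≠ 0 := by
    simp only [hx', ne_eq, Subtype.ext_iff]
    exact hxne
  have hpow : x ^ (Fintype.card R - 1) = 1 := by
    have := FiniteField.pow_card_sub_one_eq_one x' hx'ne
    have h2 := congrArg (Subtype.val) this
    simpa [hx'] using h2
  have hdvd1 : 2 ^ m - 1 ∣ 2 ^ (d * r) - 1 := by
    rw [← hordx, ← hcardS, ← hcardRS]
    exact orderOf_dvd_of_pow_eq_one hpow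
  have hmdvd : m ∣ d * r := aux_dvd m hm _ hdvd1
  have hddvd : d ∣ d * r := Dvd.intro _ rfl
  have hlcm : Nat.lcm m d = m * d / e := by
    have h1 : e * Nat.lcm m d = m * d := by rw [he]; exact Nat.gcd_mul_lcm m d
    exact (Nat.div_eq_of_eq_mul_left he_pos (by rw [← h1, mul_comm])).symm
  have hlcmdvd : m * d / e ∣ d * r := by
    rw [← hlcm]; exact Nat.lcm_dvd hmdvd hddvd
  -- card S ≤ card L
  have hle : d * r ≤ m * d / e := by
    have h1 : Fintype.card S ≤ Fintype.card L :=
      Fintype.card_le_of_injective _ Subtype.val_injective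
    rw [hcardS, hL] at h1
    exact (Nat.pow_le_pow_iff_right one_lt_two).mp h1
  have hrpos : 0 < d * r := by
    have h2 : 1 < Fintype.card S := by
      have : Nontrivial S := by
        refine ⟨⟨0, S.zero_mem⟩, ⟨1, by simpa using himgK 1⟩, ?_⟩
        intro hcon
        exact (zero_ne_one (α := L)) (congrArg Subtype.val hcon)
      exact Fintype.one_lt_card
    rw [hcardS] at h2
    by_contra h0
    simp only [not_lt, Nat.le_zero] at h0
    rw [h0] at h2
    norm_num at h2
  have heq : d * r = m * d / e := by
    have := Nat.le_of_dvd hrpos hlcmdvd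
    omega
  have hrank_eq : Module.finrank D (↥S) = Module.finrank D L := by
    have h2 : d * r = d * Module.finrank D L := by rw [heq, hrankL]
    rw [← hr]
    exact Nat.eq_of_mul_eq_mul_left hd h2
  have hSeq : S = ⊤ := Submodule.eq_top_of_finrank_eq hrank_eq
  haveI : Finite ι := Finite.of_injective b b.injective
  haveI : Fintype ι := Fintype.ofFinite ι
  have hcardι : Fintype.card ι = Module.finrank D L := by
    rw [hrk_eq, Module.finrank_eq_card_basis b]
  exact ⟨linearIndependent_of_top_le_span_of_card_eq_finrank (le_of_eq hSeq.symm) hcardι, hSeq⟩
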